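/- Let X be a finite type (of genres) and α a type (of items). Let q : α → X → ℝ assign to each item a nonnegative weight per genre (q(i, x) ≥ 0 for all i, x), let w : ℕ → ℝ be an antitone sequence of nonnegative rank weights (w(i) ≥ w(j) ≥ 0 for i ≤ j), let c : X → ℝ be nonnegative coefficients, and let φ : ℝ → ℝ be nondecreasing and concave on [0, ∞). Then the sequence function F defined on a list S = s₁ … s_k of items by F(S) = Σ_{x ∈ X} c(x)·φ(Σ_{i=1}^{k} w(i)·q(s_i, x)) is ordered-submodular. -/

import Mathlib

/-- A sequence function `f : List α → ℝ` is **ordered-submodular** if for all lists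
`A, B` and elements `s, s̄`:
`f(A ++ [s]) − f(A) ≥ f(A ++ [s] ++ B) − f(A ++ [s̄] ++ B)`. -/
def OrderedSubmodular {α : Type*} (f : List α → ℝ) : Prop :=
  ∀ (A B : List α) (s sbar : α),
    f (A ++ [s] ++ B) - f (A ++ [sbar] ++ B) ≤ f (A ++ [s]) - f A

/-- Diminishing returns for a concave function on `[0, ∞)`. -/
private lemma concave_diff_le {φ : ℝ → ℝ} (hφ : ConcaveOn ℝ (Set.Ici (0 : ℝ)) φ)
    {a u b : ℝ} (ha : 0 ≤ a) (hu : 0 ≤ u) (hb : 0 ≤ b) :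
    φ (a + b + u) - φ (a + b) ≤ φ (a + u) - φ a := by
  rcases eq_or_lt_of_le (add_nonneg hb hu) with h | h
  · have hb0 : b = 0 := by linarith [hu, hb]
    have hu0 : u = 0 := by linarith [hu, hb]
    simp [hb0, hu0]
  · set l := b / (b + u) with hl
    set m := u / (b + u) with hm
    have hl0 : 0 ≤ l := div_nonneg hb (le_of_lt h)
    have hm0 : 0 ≤ m := div_nonneg hu (le_of_lt h)
    have hlm : l + m = 1 := by
      rw [hl, hm, ← add_div]; exact div_self h.ne'
    have hx : a ∈ Set.Ici (0 : ℝ) := ha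
    have hy : a + b + u ∈ Set.Ici (0 : ℝ) := by
      simp only [Set.mem_Ici]; linarith
    have h1 : l * φ a + m * φ (a + b + u) ≤ φ (l * a + m * (a + b + u)) := by
      have := hφ.2 hx hy hl0 hm0 hlm
      simpa [smul_eq_mul] using this
    have h2 : m * φ a + l * φ (a + b + u) ≤ φ (m * a + l * (a + b + u)) := by
      have := hφ.2 hx hy hm0 hl0 (by linarith)
      simpa [smul_eq_mul] using this
    have e1 : l * a + m * (a + b + u) = a + u := by
      have : l * (b + u) = b := by rw [hl]; exact div_mul_cancel₀ b h.ne'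
      have hm' : m * (b + u) = u := by rw [hm]; exact div_mul_cancel₀ u h.ne'
      nlinarith [hlm]
    have e2 : m * a + l * (a + b + u) = a + b := by
      have : l * (b + u) = b := by rw [hl]; exact div_mul_cancel₀ b h.ne'
      nlinarith [hlm]
    rw [e1] at h1; rw [e2] at h2
    have h4 : l * φ a + m * φ a = φ a := by
      calc l * φ a + m * φ a = (l + m) * φ a := by ring
        _ = φ a := by rw [hlm, one_mul]
    have h5 : m * φ (a + b + u) + l * φ (a + b + u) = φ (a + b + u) := by
      calc m * φ (a + b + u) + l * φ (a + b + u) = (l + m) * φ (a + b + u) := by ring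
        _ = φ (a + b + u) := by rw [hlm, one_mul]
    linarith

/-- the calibration objective
`F(S) = Σ_{x ∈ X} c(x) · φ(Σ_{i=1}^{k} w(i) · q(s_i, x))`
is ordered-submodular, for nonnegative item-genre weights `q`, antitone
nonnegative rank weights `w`, nonnegative coefficients `c`, and `φ`
nondecreasing and concave on `[0, ∞)`.  The inner sum over ranks is expressed
via `List.enum` (rank `i` in the list, 1-indexed, gets weight `w i`). -/
theorem calibration_orderedSubmodular {X : Type*} [Fintype X] {α : Type*}
    (q : α → X → ℝ) (hq : ∀ i x, 0 ≤ q i x)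
    (w : ℕ → ℝ) (hw_anti : ∀ i j : ℕ, i ≤ j → w j ≤ w i) (hw_nonneg : ∀ i, 0 ≤ w i)
    (c : X → ℝ) (hc : ∀ x, 0 ≤ c x)
    (φ : ℝ → ℝ) (hφ_mono : MonotoneOn φ (Set.Ici (0 : ℝ)))
    (hφ_conc : ConcaveOn ℝ (Set.Ici (0 : ℝ)) φ) :
    OrderedSubmodular (fun S : List α =>
      ∑ x : X, c x * φ ((S.zipIdx.map (fun pr => w (pr.2 + 1) * q pr.1 x)).sum)) := by
  intro A B s sbar
  simp only
  rw [← Finset.sum_sub_distrib, ← Finset.sum_sub_distrib]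
  apply Finset.sum_le_sum
  intro x _
  rw [← mul_sub, ← mul_sub]
  apply mul_le_mul_of_nonneg_left _ (hc x)
  -- abbreviations
  set f : α × ℕ → ℝ := fun pr => w (pr.2 + 1) * q pr.1 x with hf
  have hfnn : ∀ pr : α × ℕ, 0 ≤ f pr := fun pr => mul_nonneg (hw_nonneg _) (hq _ _)
  have sum_nn : ∀ (l : List (α × ℕ)), 0 ≤ (l.map f).sum := by
    intro l
    apply List.sum_nonneg
    intro y hy
    obtain ⟨pr, _, rfl⟩ := List.mem_map.mp hy
    exact hfnn pr
  set SA : ℝ := (A.zipIdx.map f).sum with hSA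
  have hSAnn : 0 ≤ SA := sum_nn _
  set k := A.length with hk
  set T : ℝ := ((B.zipIdx (k + 1)).map f).sum with hT
  have hTnn : 0 ≤ T := sum_nn _
  have key : ∀ t : α, (((A ++ [t] ++ B).zipIdx.map f).sum) = SA + f (t, k) + T := by
    intro t
    rw [List.append_assoc, List.zipIdx_append, List.map_append, List.sum_append]
    have : ([t] ++ B).zipIdx (0 + A.length) = (t, A.length) :: B.zipIdx (A.length + 1) := by
      simp
    rw [this]
    simp [hSA, hT, hk, add_assoc]
  have key2 : ((A ++ [s]).zipIdx.map f).sum = SA + f (s, k) := by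
    rw [List.zipIdx_append, List.map_append, List.sum_append]
    simp [hSA, hk]
  rw [key s, key sbar, key2]
  have hu : 0 ≤ f (s, k) := hfnn _
  have hv : 0 ≤ f (sbar, k) := hfnn _
  calc φ (SA + f (s, k) + T) - φ (SA + f (sbar, k) + T)
      ≤ φ (SA + f (s, k) + T) - φ (SA + T) := by
        have := hφ_mono (show SA + T ∈ Set.Ici (0:ℝ) by simp only [Set.mem_Ici]; linarith)
          (show SA + f (sbar, k) + T ∈ Set.Ici (0:ℝ) by simp only [Set.mem_Ici]; linarith)
          (by linarith)
        linarith
    _ ≤ φ (SA + f (s, k)) - φ SA := by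
        have := concave_diff_le hφ_conc hSAnn hu hTnn
        have e : SA + T + f (s, k) = SA + f (s, k) + T := by ring
        rw [e] at this
        exact this
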